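/- For all p, q ∈ ℂ with p ≠ 0, q ≠ 0 and p ≠ q: if L and L′ are complex Lie algebras admitting bases realizing the bracket patterns d₆(p,q) and d₆(p−q,p) respectively, then L and L′ are isomorphic as Lie algebras over ℂ. -/

import Mathlib

/-- `Realizes L c` means that the complex Lie algebra `L` admits a basis `e₁, …, e₅`
(indexed by `Fin 5`) in which the brackets of basis vectors are given by the
structure constants `c`, i.e. `⁅eᵢ, eⱼ⁆ = ∑ₖ c i j k • eₖ` for all `i < j`,
all brackets of basis vectors being determined by these via antisymmetry. -/
def Realizes (L : Type) [LieRing L] [LieAlgebra ℂ L]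
    (c : Fin 5 → Fin 5 → Fin 5 → ℂ) : Prop :=
  ∃ e : Module.Basis (Fin 5) ℂ L, ∀ i j : Fin 5, i < j →
    ⁅e i, e j⁆ = ∑ k, c i j k • e k

/-- The bracket pattern `d₆(p,q)`: `[e₂,e₄]=e₁+p·e₂`, `[e₃,e₄]=e₂+q·e₃`, `[e₁,e₅]=−p·e₁`, `[e₂,e₅]=e₁`, `[e₃,e₅]=e₂+(q−p)·e₃`, all other brackets zero. -/
def d6 (p q : ℂ) : Fin 5 → Fin 5 → Fin 5 → ℂ := fun i j =>
  if i = 1 ∧ j = 3 then ![1, p, 0, 0, 0]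
  else if i = 2 ∧ j = 3 then ![0, 1, q, 0, 0]
  else if i = 0 ∧ j = 4 then ![-p, 0, 0, 0, 0]
  else if i = 1 ∧ j = 4 then ![1, 0, 0, 0, 0]
  else if i = 2 ∧ j = 4 then ![0, 1, q - p, 0, 0]
  else 0

noncomputable def sigMat (p q : ℂ) : Matrix (Fin 5) (Fin 5) ℂ :=
  !![p*q*(q-p), 2*p*q, p*q-p-q, 0, 0;
     p^2*q*(q-p), p*q*(p+q), -2*p*q, 0, 0;
     0, p*q^2*(q-p), -p*q*(q-p), 0, 0;
     0, 0, 0, 0, (q-p)/p;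
     0, 0, 0, -1, -q/p]

set_option maxHeartbeats 1000000 in
lemma sigMat_det (p q : ℂ) (hp : p ≠ 0) : (sigMat p q).det = p^3*q^4*(q-p)^3 := by
  simp [sigMat, Matrix.det_succ_row_zero, Fin.sum_univ_succ, Fin.succAbove]
  field_simp
  ring

set_option maxHeartbeats 4000000 in
lemma realizes_change {L : Type} [LieRing L] [LieAlgebra ℂ L] {p q : ℂ}
    (hp : p ≠ 0) (hq : q ≠ 0) (hpq : p ≠ q) (h : Realizes L (d6 p q)) :
    Realizes L (d6 (p - q) p) := by
  obtain ⟨e, he⟩ := h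
  have hqp : q - p ≠ 0 := sub_ne_zero.mpr (Ne.symm hpq)
  -- bracket table
  have e01 : ⁅e 0, e 1⁆ = 0 := by rw [he 0 1 (by decide)]; simp [d6]
  have e02 : ⁅e 0, e 2⁆ = 0 := by rw [he 0 2 (by decide)]; simp [d6]
  have e03 : ⁅e 0, e 3⁆ = 0 := by rw [he 0 3 (by decide)]; simp [d6]
  have e12 : ⁅e 1, e 2⁆ = 0 := by rw [he 1 2 (by decide)]; simp [d6]
  have e34 : ⁅e 3, e 4⁆ = 0 := by rw [he 3 4 (by decide)]; simp [d6]
  have e13 : ⁅e 1, e 3⁆ = e 0 + p • e 1 := by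
    rw [he 1 3 (by decide)]; simp [d6, Fin.sum_univ_five]
  have e23 : ⁅e 2, e 3⁆ = e 1 + q • e 2 := by
    rw [he 2 3 (by decide)]; simp [d6, Fin.sum_univ_five]
  have e04 : ⁅e 0, e 4⁆ = (-p) • e 0 := by
    rw [he 0 4 (by decide)]; simp [d6, Fin.sum_univ_five]
  have e14 : ⁅e 1, e 4⁆ = e 0 := by
    rw [he 1 4 (by decide)]; simp [d6, Fin.sum_univ_five]
  have e24 : ⁅e 2, e 4⁆ = e 1 + (q-p) • e 2 := by
    rw [he 2 4 (by decide)]; simp [d6, Fin.sum_univ_five]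
  have e10 : ⁅e 1, e 0⁆ = 0 := by rw [← lie_skew, e01, neg_zero]
  have e20 : ⁅e 2, e 0⁆ = 0 := by rw [← lie_skew, e02, neg_zero]
  have e30 : ⁅e 3, e 0⁆ = 0 := by rw [← lie_skew, e03, neg_zero]
  have e21 : ⁅e 2, e 1⁆ = 0 := by rw [← lie_skew, e12, neg_zero]
  have e43 : ⁅e 4, e 3⁆ = 0 := by rw [← lie_skew, e34, neg_zero]
  have e31 : ⁅e 3, e 1⁆ = -(e 0 + p • e 1) := by rw [← lie_skew, e13]
  have e32 : ⁅e 3, e 2⁆ = -(e 1 + q • e 2) := by rw [← lie_skew, e23]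
  have e40 : ⁅e 4, e 0⁆ = -((-p) • e 0) := by rw [← lie_skew, e04]
  have e41 : ⁅e 4, e 1⁆ = -(e 0) := by rw [← lie_skew, e14]
  have e42 : ⁅e 4, e 2⁆ = -(e 1 + (q-p) • e 2) := by rw [← lie_skew, e24]
  -- new basis
  have hdet : IsUnit (sigMat p q).det := by
    rw [sigMat_det p q hp]
    exact isUnit_iff_ne_zero.mpr
      (mul_ne_zero (mul_ne_zero (pow_ne_zero _ hp) (pow_ne_zero _ hq)) (pow_ne_zero _ hqp))
  set f : Module.Basis (Fin 5) ℂ L := e.map (Matrix.toLinearEquiv e (sigMat p q) hdet) with hfdef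
  have hf : ∀ i, f i = ∑ j, sigMat p q j i • e j := fun i => by
    rw [hfdef, Module.Basis.map_apply, Matrix.toLinearEquiv_apply, Matrix.toLin_self]
  have hf0 : f 0 = (p*q*(q-p)) • e 0 + (p^2*q*(q-p)) • e 1 := by
    rw [hf 0]; simp [sigMat, Fin.sum_univ_five, Matrix.vecHead, Matrix.vecTail]
  have hf1 : f 1 = (2*(p*q)) • e 0 + (p*q*(p+q)) • e 1 + (p*q^2*(q-p)) • e 2 := by
    rw [hf 1]; simp [sigMat, Fin.sum_univ_five, Matrix.vecHead, Matrix.vecTail]; module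
  have hf2 : f 2 = (p*q-p-q) • e 0 + (-(2*(p*q))) • e 1 + (-(p*q*(q-p))) • e 2 := by
    rw [hf 2]; simp [sigMat, Fin.sum_univ_five, Matrix.vecHead, Matrix.vecTail]; module
  have hf3 : f 3 = (-1 : ℂ) • e 4 := by
    rw [hf 3]; simp [sigMat, Fin.sum_univ_five, Matrix.vecHead, Matrix.vecTail]
  have hf4 : f 4 = ((q-p)/p) • e 3 + (-(q/p)) • e 4 := by
    rw [hf 4]; simp [sigMat, Fin.sum_univ_five, Matrix.vecHead, Matrix.vecTail]; module
  refine ⟨f, ?_⟩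
  intro i j hij
  fin_cases i <;> fin_cases j <;>
    first
      | exact absurd hij (by decide)
      | (simp [Fin.isValue, Fin.sum_univ_five, hf0, hf1, hf2, hf3, hf4, d6,
           Matrix.cons_val_zero, Matrix.cons_val_one, Matrix.head_cons,
           Matrix.cons_val_two, Matrix.tail_cons, Matrix.cons_val_three, Matrix.cons_val_four,
           Matrix.vecHead, Matrix.vecTail,
           Fin.reduceEq, and_self, and_true, true_and, and_false, false_and, if_true, if_false,
           ite_true, ite_false, Pi.zero_apply, reduceCtorEq,
           add_lie, lie_add, smul_lie, lie_smul, e01, e02, e03, e04, e10, e12, e13, e14,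
           e20, e21, e23, e24, e30, e31, e32, e34, e40, e41, e42, e43, lie_self]
         try (match_scalars <;> (first | ring1 | (field_simp <;> ring1))))

lemma realizes_equiv {L L' : Type} [LieRing L] [LieAlgebra ℂ L] [LieRing L'] [LieAlgebra ℂ L']
    {c : Fin 5 → Fin 5 → Fin 5 → ℂ} (h : Realizes L c) (h' : Realizes L' c) :
    Nonempty (L ≃ₗ⁅ℂ⁆ L') := by
  obtain ⟨e, he⟩ := h
  obtain ⟨e', he'⟩ := h'
  let g : L ≃ₗ[ℂ] L' := e.equiv e' (Equiv.refl _)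
  have hge : ∀ i, g (e i) = e' i := fun i => e.equiv_apply i e' (Equiv.refl _)
  have key : ∀ x y : L, g ⁅x, y⁆ = ⁅g x, g y⁆ := by
    let B1 : L →ₗ[ℂ] L →ₗ[ℂ] L' := LinearMap.mk₂ ℂ (fun x y => g ⁅x, y⁆)
      (fun x x' y => by simp [add_lie]) (fun a x y => by simp [smul_lie])
      (fun x y y' => by simp [lie_add]) (fun a x y => by simp [lie_smul])
    let B2 : L →ₗ[ℂ] L →ₗ[ℂ] L' := LinearMap.mk₂ ℂ (fun x y => ⁅g x, g y⁆)
      (fun x x' y => by simp) (fun a x y => by simp)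
      (fun x y y' => by simp) (fun a x y => by simp)
    have hB : B1 = B2 := by
      apply e.ext; intro i
      apply e.ext; intro j
      show g ⁅e i, e j⁆ = ⁅g (e i), g (e j)⁆
      rw [hge, hge]
      rcases lt_trichotomy i j with hij | hij | hij
      · rw [he i j hij, he' i j hij, map_sum]
        simp [map_smul, hge]
      · subst hij; simp
      · rw [← lie_skew (e i) (e j), ← lie_skew (e' i) (e' j), he j i hij, he' j i hij,
          map_neg, map_sum]
        simp [map_smul, hge]
    intro x y
    exact LinearMap.congr_fun (LinearMap.congr_fun hB x) y
  exact ⟨{ g with map_lie' := fun {x y} => key x y }⟩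

/-- For `p ≠ 0`, `q ≠ 0`, `p ≠ q`, Lie algebras realizing the patterns
`d₆(p,q)` and `d₆(p−q,p)` are isomorphic. -/
theorem d6_sigma_symmetry (p q : ℂ) (hp : p ≠ 0) (hq : q ≠ 0) (hpq : p ≠ q)
    (L L' : Type) [LieRing L] [LieAlgebra ℂ L] [LieRing L'] [LieAlgebra ℂ L']
    (hL : Realizes L (d6 p q)) (hL' : Realizes L' (d6 (p - q) p)) :
    Nonempty (L ≃ₗ⁅ℂ⁆ L') := by
  exact realizes_equiv (realizes_change hp hq hpq hL) hL'
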